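/- Let I be an invariant ideal on ℕ, let x = (x_n) be a sequence in a topological space X with x →_I ℓ, and let ω ∈ (0,1] be a normal number, i.e., (1/n) Σ_{i=1}^n d_i(ω) → 1/2. Then x↾ω →_I ℓ. -/

import Mathlib

open Filter Topology MeasureTheory Set

/-- The canonical (increasing) enumeration of a set of natural numbers. -/
noncomputable def enumOf (A : Set ℕ) : ℕ → ℕ := Nat.nth (· ∈ A)

/-- `idxSet A B` is the set `A_B = {a_b : b ∈ B}`, where `{a_n}` is the canonical
enumeration of `A`. -/
noncomputable def idxSet (A B : Set ℕ) : Set ℕ := enumOf A '' B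

/-- `seqLE X Y` means `X ≤ Y`, i.e. `x_n ≤ y_n` for all `n`, for the canonical
enumerations `{x_n}` of `X` and `{y_n}` of `Y`. -/
def seqLE (X Y : Set ℕ) : Prop := ∀ n, enumOf X n ≤ enumOf Y n

/-- `A` has asymptotic density `c`: `|A ∩ [1,n]| / n → c`. -/
def HasDensity (A : Set ℕ) (c : ℝ) : Prop :=
  Tendsto (fun n : ℕ => ((A ∩ Set.Icc 1 n).ncard : ℝ) / n) atTop (𝓝 c)

/-- An ideal on ℕ: closed under finite unions and subsets, contains all finite sets,
and is not the whole power set. -/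
def IsIdeal (I : Set (Set ℕ)) : Prop :=
  (∀ A B : Set ℕ, A ∈ I → B ∈ I → A ∪ B ∈ I) ∧
  (∀ A B : Set ℕ, A ⊆ B → B ∈ I → A ∈ I) ∧
  (∀ A : Set ℕ, A.Finite → A ∈ I) ∧
  Set.univ ∉ I

/-- `I` is weakly thinnable: `A_B ∉ I` whenever `A` admits non-zero asymptotic density
and `B ∉ I`. -/
def WeaklyThinnable (I : Set (Set ℕ)) : Prop :=
  ∀ A B : Set ℕ, (∃ c : ℝ, c ≠ 0 ∧ HasDensity A c) → B ∉ I → idxSet A B ∉ I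

/-- `I` is thinnable: weakly thinnable, `B_A ∉ I` whenever `A` admits non-zero asymptotic
density and `B ∉ I`, and `X ∉ I` whenever `X ≤ Y` and `Y ∉ I`. -/
def Thinnable (I : Set (Set ℕ)) : Prop :=
  WeaklyThinnable I ∧
  (∀ A B : Set ℕ, (∃ c : ℝ, c ≠ 0 ∧ HasDensity A c) → B ∉ I → idxSet B A ∉ I) ∧
  (∀ X Y : Set ℕ, X.Infinite → Y.Infinite → seqLE X Y → Y ∉ I → X ∉ I)

/-- `I` is strechable: `kA ∉ I` for all (positive) `k` and all `A ∉ I`. -/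
def Strechable (I : Set (Set ℕ)) : Prop :=
  ∀ k : ℕ, 0 < k → ∀ A : Set ℕ, A ∉ I → (fun a => k * a) '' A ∉ I

/-- The digit `d_{i+1}(ω)` of the non-terminating dyadic expansion of `ω ∈ (0,1]`
(digits are indexed from `0` to match `0`-indexed sequences). -/
noncomputable def dyadicDigit (ω : ℝ) (i : ℕ) : ℤ :=
  ⌈(2 : ℝ) ^ (i + 1) * ω⌉ - 2 * ⌈(2 : ℝ) ^ i * ω⌉ + 1

/-- The set of indices kept when passing to the subsequence `x ↾ ω`. -/
def keepSet (ω : ℝ) : Set ℕ := {i | dyadicDigit ω i = 1}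

/-- The subsequence `x ↾ ω` of `x`, keeping `x_i` exactly when `d_i(ω) = 1`. -/
noncomputable def subseq {X : Type*} (x : ℕ → X) (ω : ℝ) : ℕ → X :=
  fun n => x (enumOf (keepSet ω) n)

/-- `ω` is a normal number: `(1/n) ∑_{i=1}^n d_i(ω) → 1/2`. -/
def IsNormal (ω : ℝ) : Prop :=
  Tendsto (fun n : ℕ => (∑ i ∈ Finset.range n, (dyadicDigit ω i : ℝ)) / n) atTop (𝓝 (1 / 2))

/-- `x →_I l`: the sequence `x` `I`-converges to `l`. -/
def IdealConv {X : Type*} [TopologicalSpace X] (I : Set (Set ℕ)) (x : ℕ → X) (l : X) : Prop :=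
  ∀ U ∈ 𝓝 l, {n | x n ∉ U} ∈ I

/-- `I` is invariant: for each `A` with positive asymptotic density,
`A_B ∉ I` if and only if `B ∉ I`. -/
def Invariant (I : Set (Set ℕ)) : Prop :=
  ∀ A B : Set ℕ, (∃ c : ℝ, 0 < c ∧ HasDensity A c) → (idxSet A B ∉ I ↔ B ∉ I)

lemma digit01 (ω : ℝ) (i : ℕ) : dyadicDigit ω i = 0 ∨ dyadicDigit ω i = 1 := by
  unfold dyadicDigit
  have h2 : (2:ℝ) ^ (i+1) * ω = 2 * ((2:ℝ) ^ i * ω) := by ring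
  rw [h2]
  set t : ℝ := 2 ^ i * ω
  have h1 : ⌈2 * t⌉ ≤ 2 * ⌈t⌉ := by
    apply Int.ceil_le.mpr
    push_cast
    linarith [Int.le_ceil t]
  have h3 : 2 * ⌈t⌉ - 2 < ⌈2 * t⌉ := by
    apply Int.lt_ceil.mpr
    push_cast
    linarith [Int.ceil_lt_add_one t]
  omega

lemma keep_count (ω : ℝ) (n : ℕ) :
    ((keepSet ω ∩ Set.Icc 1 n).ncard : ℝ)
      = (∑ i ∈ Finset.range (n+1), (dyadicDigit ω i : ℝ)) - (dyadicDigit ω 0 : ℝ) := by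
  have hset : keepSet ω ∩ Set.Icc 1 n
      = ↑((Finset.Icc 1 n).filter (fun i => dyadicDigit ω i = 1)) := by
    ext i; simp [keepSet, and_comm]
  rw [hset, Set.ncard_coe_finset, Finset.sum_range_succ']
  have h1 : ∑ i ∈ Finset.range n, (dyadicDigit ω (i+1) : ℝ)
      = ∑ i ∈ Finset.Icc 1 n, (dyadicDigit ω i : ℝ) := by
    rw [show Finset.Icc 1 n = Finset.Ico 1 (n+1) from (Finset.Ico_add_one_right_eq_Icc 1 n).symm,
      Finset.sum_Ico_eq_sum_range]
    simp [add_comm]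
  have h2 : ((((Finset.Icc 1 n).filter (fun i => dyadicDigit ω i = 1)).card : ℝ))
      = ∑ i ∈ Finset.Icc 1 n, (dyadicDigit ω i : ℝ) := by
    rw [Finset.card_filter]
    push_cast
    apply Finset.sum_congr rfl
    intro i _
    rcases digit01 ω i with h | h <;> simp [h]
  rw [h2, h1]
  ring

lemma keep_density (ω : ℝ) (hnorm : IsNormal ω) : HasDensity (keepSet ω) (1/2) := by
  unfold HasDensity
  have h1 : Tendsto (fun n : ℕ =>
      (∑ i ∈ Finset.range (n+1), (dyadicDigit ω i : ℝ)) / ((n:ℝ)+1)) atTop (𝓝 (1/2)) := by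
    refine (hnorm.comp (tendsto_add_atTop_nat 1)).congr fun n => ?_
    simp only [Function.comp_apply]
    push_cast
    ring
  have h2 : Tendsto (fun n : ℕ => ((n:ℝ)+1)/n) atTop (𝓝 1) := by
    have he : (fun n : ℕ => ((n:ℝ)+1)/n) =ᶠ[atTop] fun n : ℕ => 1 + 1/(n:ℝ) := by
      filter_upwards [eventually_gt_atTop 0] with n hn
      have hn' : (n:ℝ) ≠ 0 := Nat.cast_ne_zero.mpr hn.ne'
      field_simp
    rw [tendsto_congr' he]
    simpa using tendsto_const_nhds.add (tendsto_one_div_atTop_nhds_zero_nat (𝕜 := ℝ))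
  have h3 : Tendsto (fun n : ℕ => (dyadicDigit ω 0 : ℝ)/n) atTop (𝓝 0) := by
    exact Tendsto.div_atTop tendsto_const_nhds tendsto_natCast_atTop_atTop
  have h4 := (h1.mul h2).sub h3
  rw [show (1:ℝ)/2 * 1 - 0 = 1/2 by ring] at h4
  apply h4.congr'
  filter_upwards [eventually_gt_atTop 0] with n hn
  rw [keep_count ω n]
  have hn' : (n:ℝ) ≠ 0 := Nat.cast_ne_zero.mpr hn.ne'
  have hn1 : (n:ℝ) + 1 ≠ 0 := by positivity
  field_simp

/-- If `I` is an invariant ideal, `x →_I l`, and `ω ∈ (0,1]` is a normal number,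
then `x ↾ ω →_I l`. -/
theorem stmt13 {X : Type*} [TopologicalSpace X]
    (I : Set (Set ℕ)) (hI : IsIdeal I) (hinv : Invariant I)
    (x : ℕ → X) (l : X) (hconv : IdealConv I x l)
    (ω : ℝ) (hω : ω ∈ Set.Ioc (0 : ℝ) 1) (hnorm : IsNormal ω) :
    IdealConv I (subseq x ω) l := by
  intro U hU
  have hA : HasDensity (keepSet ω) (1/2) := keep_density ω hnorm
  have hS := hconv U hU
  set T := {n | subseq x ω n ∉ U} with hT
  have hsub : idxSet (keepSet ω) T ⊆ {n | x n ∉ U} := by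
    rintro m ⟨n, hn, rfl⟩; exact hn
  by_contra hTmem
  have h := (hinv (keepSet ω) T ⟨1/2, by norm_num, hA⟩).mpr hTmem
  exact h (hI.2.1 _ _ hsub hS)
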